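/- Let G : ℝ → ℝ → ℝ be twice differentiable with G_e > 0, G_{ee} < 0, G_{vv} < 0 and G_{ee}G_{vv} > G_{ev}² pointwise. Define q(ρ, m, E) = -ρ·G(E/ρ - m²/(2ρ²), 1/ρ) for ρ > 0. Then the determinant of the 3×3 Hessian of q with respect to (ρ, m, E) equals v⁵ G_e (G_{vv}G_{ee} - G_{ev}²) where v = 1/ρ, and in particular it is strictly positive. -/

import Mathlib

open Real Matrix

private lemma clm_eval (L : ℝ × ℝ →L[ℝ] ℝ) (a b : ℝ) :
    L (a, b) = a * L (1, 0) + b * L (0, 1) := by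
  have h : (a, b) = a • ((1 : ℝ), (0 : ℝ)) + b • ((0 : ℝ), (1 : ℝ)) := by
    simp [Prod.ext_iff]
  rw [h, L.map_add, L.map_smul, L.map_smul, smul_eq_mul, smul_eq_mul]

private lemma hasDerivAt_comp2 {F : ℝ × ℝ → ℝ} {a b : ℝ → ℝ} {a' b' t : ℝ}
    (hF : DifferentiableAt ℝ F (a t, b t))
    (ha : HasDerivAt a a' t) (hb : HasDerivAt b b' t) :
    HasDerivAt (fun s => F (a s, b s))
      (a' * fderiv ℝ F (a t, b t) (1, 0) + b' * fderiv ℝ F (a t, b t) (0, 1)) t := by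
  have h := hF.hasFDerivAt.comp_hasDerivAt t (ha.prodMk hb)
  rwa [clm_eval] at h

noncomputable def QPe (G : ℝ → ℝ → ℝ) : ℝ × ℝ → ℝ :=
  fun p => fderiv ℝ (Function.uncurry G) p (1, 0)

noncomputable def QPv (G : ℝ → ℝ → ℝ) : ℝ × ℝ → ℝ :=
  fun p => fderiv ℝ (Function.uncurry G) p (0, 1)

section
variable {G : ℝ → ℝ → ℝ} (hG : ContDiff ℝ 2 (Function.uncurry G))
include hG

private lemma contDiff_QPe : ContDiff ℝ 1 (QPe G) :=
  (hG.fderiv_right (by norm_num)).clm_apply contDiff_const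

private lemma contDiff_QPv : ContDiff ℝ 1 (QPv G) :=
  (hG.fderiv_right (by norm_num)).clm_apply contDiff_const

private lemma hasDerivAt_slice1 (a b : ℝ) :
    HasDerivAt (fun x => G x b) (QPe G (a, b)) a := by
  have hfd : DifferentiableAt ℝ (Function.uncurry G) (a, b) :=
    (hG.differentiable (by norm_num)) _
  have h := hfd.hasFDerivAt.comp_hasDerivAt a ((hasDerivAt_id a).prodMk (hasDerivAt_const a b))
  simpa [Function.comp_def, QPe] using h

private lemma hasDerivAt_slice2 (a b : ℝ) :
    HasDerivAt (fun y => G a y) (QPv G (a, b)) b := by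
  have hfd : DifferentiableAt ℝ (Function.uncurry G) (a, b) :=
    (hG.differentiable (by norm_num)) _
  have h := hfd.hasFDerivAt.comp_hasDerivAt b ((hasDerivAt_const b a).prodMk (hasDerivAt_id b))
  simpa [Function.comp_def, QPv] using h

private lemma QP_symm (p : ℝ × ℝ) :
    fderiv ℝ (QPe G) p (0, 1) = fderiv ℝ (QPv G) p (1, 0) := by
  have hdf : Differentiable ℝ (fderiv ℝ (Function.uncurry G)) :=
    (hG.fderiv_right (m := 1) (by norm_num)).differentiable (by norm_num)
  have hsymm : IsSymmSndFDerivAt ℝ (Function.uncurry G) p :=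
    hG.contDiffAt.isSymmSndFDerivAt (by simp)
  have h1 : fderiv ℝ (QPe G) p =
      (fderiv ℝ (fderiv ℝ (Function.uncurry G)) p).flip (1, 0) := by
    have := fderiv_clm_apply (hdf p) (differentiableAt_const ((1 : ℝ), (0 : ℝ)))
    rw [show QPe G = fun p => fderiv ℝ (Function.uncurry G) p (1, 0) from rfl]
    simpa using this
  have h2 : fderiv ℝ (QPv G) p =
      (fderiv ℝ (fderiv ℝ (Function.uncurry G)) p).flip (0, 1) := by
    have := fderiv_clm_apply (hdf p) (differentiableAt_const ((0 : ℝ), (1 : ℝ)))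
    rw [show QPv G = fun p => fderiv ℝ (Function.uncurry G) p (0, 1) from rfl]
    simpa using this
  rw [h1, h2]
  exact hsymm _ _
end

set_option maxHeartbeats 2000000 in
private lemma q_det_entries (ρ m E P b1 b2 b4 : ℝ) (hρ : ρ ≠ 0) :
    Matrix.det
      !![m ^ 2 / ρ ^ 3 * P - 1 / ρ * (E / ρ - m ^ 2 / ρ ^ 2) ^ 2 * b1
          - 1 / ρ ^ 2 * (E / ρ - m ^ 2 / ρ ^ 2) * (b2 + b2) - 1 / ρ ^ 3 * b4,
        -(m / ρ ^ 2) * P - m / ρ ^ 2 * (E / ρ - m ^ 2 / ρ ^ 2) * b1 - m / ρ ^ 3 * b2,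
        1 / ρ * (E / ρ - m ^ 2 / ρ ^ 2) * b1 + 1 / ρ ^ 2 * b2;
        -(m / ρ ^ 2) * P - m / ρ ^ 2 * (E / ρ - m ^ 2 / ρ ^ 2) * b1 - m / ρ ^ 3 * b2,
        1 / ρ * P - m ^ 2 / ρ ^ 3 * b1,
        m / ρ ^ 2 * b1;
        1 / ρ * (E / ρ - m ^ 2 / ρ ^ 2) * b1 + 1 / ρ ^ 2 * b2,
        m / ρ ^ 2 * b1,
        -(1 / ρ * b1)]
      = (1 / ρ) ^ 5 * P * (b4 * b1 - b2 ^ 2) := by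
  simp only [Matrix.det_fin_three, Matrix.of_apply, Matrix.cons_val', Matrix.cons_val_zero, Matrix.cons_val_one,
    Matrix.head_cons, Matrix.empty_val', Matrix.cons_val_fin_one, Matrix.head_fin_const,
    Matrix.cons_val_two, Matrix.tail_cons]
  field_simp
  ring


set_option maxHeartbeats 1000000 in
theorem q_hessian_det
    (G : ℝ → ℝ → ℝ)
    (hG : ContDiff ℝ 2 (Function.uncurry G))
    (hGe : ∀ e v : ℝ, 0 < deriv (fun x => G x v) e)
    (hGee : ∀ e v : ℝ, deriv (fun x => deriv (fun y => G y v) x) e < 0)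
    (hGvv : ∀ e v : ℝ, deriv (fun x => deriv (fun y => G e y) x) v < 0)
    (hconc : ∀ e v : ℝ,
      (deriv (fun x => deriv (fun y => G y x) e) v) ^ 2 <
        (deriv (fun x => deriv (fun y => G y v) x) e) *
        (deriv (fun x => deriv (fun y => G e y) x) v))
    (q : ℝ → ℝ → ℝ → ℝ)
    (hq : ∀ ρ m E : ℝ, q ρ m E = -ρ * G (E / ρ - m ^ 2 / (2 * ρ ^ 2)) (1 / ρ)) :
    ∀ ρ m E : ℝ, 0 < ρ →
      let e := E / ρ - m ^ 2 / (2 * ρ ^ 2)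
      let v := 1 / ρ
      let qρρ := deriv (fun r => deriv (fun r' => q r' m E) r) ρ
      let qmm := deriv (fun y => deriv (fun y' => q ρ y' E) y) m
      let qEE := deriv (fun z => deriv (fun z' => q ρ m z') z) E
      let qρm := deriv (fun y => deriv (fun r => q r y E) ρ) m
      let qρE := deriv (fun z => deriv (fun r => q r m z) ρ) E
      let qmE := deriv (fun z => deriv (fun y => q ρ y z) m) E
      let Ge := deriv (fun x => G x v) e
      let Gee := deriv (fun x => deriv (fun y => G y v) x) e
      let Gvv := deriv (fun x => deriv (fun y => G e y) x) v
      let Gev := deriv (fun x => deriv (fun y => G y x) e) v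
      Matrix.det !![qρρ, qρm, qρE; qρm, qmm, qmE; qρE, qmE, qEE]
        = v ^ 5 * Ge * (Gvv * Gee - Gev ^ 2)
      ∧ 0 < Matrix.det !![qρρ, qρm, qρE; qρm, qmm, qmE; qρE, qmE, qEE] := by
  intro ρ m E hρ
  intro e v qρρ qmm qEE qρm qρE qmE Ge Gee Gvv Gev
  unfold qρρ qmm qEE qρm qρE qmE Ge Gee Gvv Gev e v
  have hρ0 : ρ ≠ 0 := ne_of_gt hρ
  have hfd : Differentiable ℝ (Function.uncurry G) := hG.differentiable (by norm_num)
  have hPed : Differentiable ℝ (QPe G) := (contDiff_QPe hG).differentiable (by norm_num)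
  have hPvd : Differentiable ℝ (QPv G) := (contDiff_QPv hG).differentiable (by norm_num)
  -- abbreviations (as plain terms)
  -- P := QPe G (E/ρ - m^2/(2ρ^2), 1/ρ), b1..b4 second partials
  -- basic one-dimensional derivatives
  have hez : ∀ z : ℝ, HasDerivAt (fun z' : ℝ => z' / ρ - m ^ 2 / (2 * ρ ^ 2)) (1 / ρ) z :=
    fun z => ((hasDerivAt_id' z).div_const ρ).sub_const _
  have hem : ∀ (y z : ℝ), HasDerivAt (fun y' : ℝ => z / ρ - y' ^ 2 / (2 * ρ ^ 2))
      (-(y / ρ ^ 2)) y := by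
    intro y z
    have h := ((hasDerivAt_pow 2 y).div_const (2 * ρ ^ 2)).const_sub (z / ρ)
    refine h.congr_deriv ?_
    field_simp
    ring
  have her : ∀ (y z r : ℝ), r ≠ 0 → HasDerivAt (fun r' : ℝ => z / r' - y ^ 2 / (2 * r' ^ 2))
      (-(z / r ^ 2) + y ^ 2 / r ^ 3) r := by
    intro y z r hr
    have h1 := HasDerivAt.const_mul z (hasDerivAt_inv hr)
    have h2 := HasDerivAt.const_mul (y ^ 2 / 2) ((hasDerivAt_inv hr).fun_pow 2)
    have h3 := h1.fun_sub h2
    have hfun : (fun x : ℝ => z * x⁻¹ - y ^ 2 / 2 * (x⁻¹) ^ 2)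
        = fun r' : ℝ => z / r' - y ^ 2 / (2 * r' ^ 2) := by
      funext x; ring
    rw [hfun] at h3
    refine h3.congr_deriv ?_
    norm_num
    field_simp
  have hvr : ∀ (r : ℝ), r ≠ 0 → HasDerivAt (fun r' : ℝ => 1 / r') (-(1 / r ^ 2)) r := by
    intro r hr
    simpa [one_div] using hasDerivAt_inv hr
  -- first partial derivatives of q
  have hd1E : ∀ z : ℝ, HasDerivAt (fun z' => q ρ m z')
      (-QPe G (z / ρ - m ^ 2 / (2 * ρ ^ 2), 1 / ρ)) z := by
    intro z
    simp only [hq]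
    have h := HasDerivAt.const_mul (-ρ)
      (hasDerivAt_comp2 (F := Function.uncurry G) (hfd _) (hez z) (hasDerivAt_const z (1 / ρ)))
    simp only [Function.uncurry_apply_pair] at h
    refine h.congr_deriv ?_
    simp only [QPe, QPv]
    field_simp
    ring
  have hd1m : ∀ (y z : ℝ), HasDerivAt (fun y' => q ρ y' z)
      (y / ρ * QPe G (z / ρ - y ^ 2 / (2 * ρ ^ 2), 1 / ρ)) y := by
    intro y z
    simp only [hq]
    have h := HasDerivAt.const_mul (-ρ)
      (hasDerivAt_comp2 (F := Function.uncurry G) (hfd _) (hem y z) (hasDerivAt_const y (1 / ρ)))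
    simp only [Function.uncurry_apply_pair] at h
    refine h.congr_deriv ?_
    simp only [QPe, QPv]
    field_simp
    ring
  have hd1r : ∀ (y z r : ℝ), r ≠ 0 → HasDerivAt (fun r' => q r' y z)
      (-1 * G (z / r - y ^ 2 / (2 * r ^ 2)) (1 / r) +
        -r * ((-(z / r ^ 2) + y ^ 2 / r ^ 3) * QPe G (z / r - y ^ 2 / (2 * r ^ 2), 1 / r) +
          -(1 / r ^ 2) * QPv G (z / r - y ^ 2 / (2 * r ^ 2), 1 / r))) r := by
    intro y z r hr
    simp only [hq]
    have hcomp := hasDerivAt_comp2 (F := Function.uncurry G) (hfd _) (her y z r hr) (hvr r hr)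
    simp only [Function.uncurry_apply_pair] at hcomp
    have h := HasDerivAt.mul (hasDerivAt_neg' r) hcomp
    refine h.congr_deriv ?_
    rfl
  -- second derivative entries
  have hqEE : deriv (fun z => deriv (fun z' => q ρ m z') z) E
      = -(1 / ρ * fderiv ℝ (QPe G) (E / ρ - m ^ 2 / (2 * ρ ^ 2), 1 / ρ) (1, 0)) := by
    have hfun : (fun z => deriv (fun z' => q ρ m z') z)
        = fun z => -QPe G (z / ρ - m ^ 2 / (2 * ρ ^ 2), 1 / ρ) :=
      funext fun z => (hd1E z).deriv
    rw [hfun]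
    have h := (hasDerivAt_comp2 (F := QPe G) (hPed _) (hez E) (hasDerivAt_const E (1 / ρ))).neg
    have h' : HasDerivAt (fun z : ℝ => -QPe G (z / ρ - m ^ 2 / (2 * ρ ^ 2), 1 / ρ))
        (-(1 / ρ * fderiv ℝ (QPe G) (E / ρ - m ^ 2 / (2 * ρ ^ 2), 1 / ρ) (1, 0))) E := by
      refine h.congr_deriv ?_
      simp
    exact h'.deriv
  have hqmE : deriv (fun z => deriv (fun y => q ρ y z) m) E
      = m / ρ ^ 2 * fderiv ℝ (QPe G) (E / ρ - m ^ 2 / (2 * ρ ^ 2), 1 / ρ) (1, 0) := by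
    have hfun : (fun z => deriv (fun y => q ρ y z) m)
        = fun z => m / ρ * QPe G (z / ρ - m ^ 2 / (2 * ρ ^ 2), 1 / ρ) :=
      funext fun z => (hd1m m z).deriv
    rw [hfun]
    have h := HasDerivAt.const_mul (m / ρ)
      (hasDerivAt_comp2 (F := QPe G) (hPed _) (hez E) (hasDerivAt_const E (1 / ρ)))
    have h' : HasDerivAt (fun z : ℝ => m / ρ * QPe G (z / ρ - m ^ 2 / (2 * ρ ^ 2), 1 / ρ))
        (m / ρ ^ 2 * fderiv ℝ (QPe G) (E / ρ - m ^ 2 / (2 * ρ ^ 2), 1 / ρ) (1, 0)) E := by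
      refine h.congr_deriv ?_
      ring
    exact h'.deriv
  have hqmm : deriv (fun y => deriv (fun y' => q ρ y' E) y) m
      = 1 / ρ * QPe G (E / ρ - m ^ 2 / (2 * ρ ^ 2), 1 / ρ)
        - m ^ 2 / ρ ^ 3 * fderiv ℝ (QPe G) (E / ρ - m ^ 2 / (2 * ρ ^ 2), 1 / ρ) (1, 0) := by
    have hfun : (fun y => deriv (fun y' => q ρ y' E) y)
        = fun y => y / ρ * QPe G (E / ρ - y ^ 2 / (2 * ρ ^ 2), 1 / ρ) :=
      funext fun y => (hd1m y E).deriv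
    rw [hfun]
    have h1 : HasDerivAt (fun y : ℝ => y / ρ) (1 / ρ) m := (hasDerivAt_id' m).div_const ρ
    have h2 := hasDerivAt_comp2 (F := QPe G) (hPed _) (hem m E) (hasDerivAt_const m (1 / ρ))
    have h := h1.mul h2
    have h' : HasDerivAt (fun y : ℝ => y / ρ * QPe G (E / ρ - y ^ 2 / (2 * ρ ^ 2), 1 / ρ))
        (1 / ρ * QPe G (E / ρ - m ^ 2 / (2 * ρ ^ 2), 1 / ρ)
          - m ^ 2 / ρ ^ 3 * fderiv ℝ (QPe G) (E / ρ - m ^ 2 / (2 * ρ ^ 2), 1 / ρ) (1, 0)) m := by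
      refine h.congr_deriv ?_
      ring
    exact h'.deriv
  have hqrE : deriv (fun z => deriv (fun r => q r m z) ρ) E
      = 1 / ρ * (E / ρ - m ^ 2 / ρ ^ 2) *
          fderiv ℝ (QPe G) (E / ρ - m ^ 2 / (2 * ρ ^ 2), 1 / ρ) (1, 0)
        + 1 / ρ ^ 2 * fderiv ℝ (QPv G) (E / ρ - m ^ 2 / (2 * ρ ^ 2), 1 / ρ) (1, 0) := by
    have hfun : (fun z => deriv (fun r => q r m z) ρ)
        = fun z => -1 * G (z / ρ - m ^ 2 / (2 * ρ ^ 2)) (1 / ρ) +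
          -ρ * ((-(z / ρ ^ 2) + m ^ 2 / ρ ^ 3) * QPe G (z / ρ - m ^ 2 / (2 * ρ ^ 2), 1 / ρ) +
            -(1 / ρ ^ 2) * QPv G (z / ρ - m ^ 2 / (2 * ρ ^ 2), 1 / ρ)) :=
      funext fun z => (hd1r m z ρ hρ0).deriv
    rw [hfun]
    have hg := hasDerivAt_comp2 (F := Function.uncurry G) (hfd _) (hez E)
      (hasDerivAt_const E (1 / ρ))
    simp only [Function.uncurry_apply_pair] at hg
    have hA : HasDerivAt (fun z : ℝ => -(z / ρ ^ 2) + m ^ 2 / ρ ^ 3) (-(1 / ρ ^ 2)) E := by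
      exact (((hasDerivAt_id' E).div_const (ρ ^ 2)).neg).add_const (m ^ 2 / ρ ^ 3)
    have hPc := hasDerivAt_comp2 (F := QPe G) (hPed _) (hez E) (hasDerivAt_const E (1 / ρ))
    have hVc := hasDerivAt_comp2 (F := QPv G) (hPvd _) (hez E) (hasDerivAt_const E (1 / ρ))
    have h := (HasDerivAt.const_mul (-1 : ℝ) hg).add
      (HasDerivAt.const_mul (-ρ) ((hA.mul hPc).add (HasDerivAt.const_mul (-(1 / ρ ^ 2)) hVc)))
    have h' : HasDerivAt (fun z : ℝ => -1 * G (z / ρ - m ^ 2 / (2 * ρ ^ 2)) (1 / ρ) +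
          -ρ * ((-(z / ρ ^ 2) + m ^ 2 / ρ ^ 3) * QPe G (z / ρ - m ^ 2 / (2 * ρ ^ 2), 1 / ρ) +
            -(1 / ρ ^ 2) * QPv G (z / ρ - m ^ 2 / (2 * ρ ^ 2), 1 / ρ)))
        (1 / ρ * (E / ρ - m ^ 2 / ρ ^ 2) *
            fderiv ℝ (QPe G) (E / ρ - m ^ 2 / (2 * ρ ^ 2), 1 / ρ) (1, 0)
          + 1 / ρ ^ 2 * fderiv ℝ (QPv G) (E / ρ - m ^ 2 / (2 * ρ ^ 2), 1 / ρ) (1, 0)) E := by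
      refine h.congr_deriv ?_
      simp only [QPe, QPv]
      field_simp
      ring
    exact h'.deriv
  have hqrm : deriv (fun y => deriv (fun r => q r y E) ρ) m
      = -(m / ρ ^ 2) * QPe G (E / ρ - m ^ 2 / (2 * ρ ^ 2), 1 / ρ)
        - m / ρ ^ 2 * (E / ρ - m ^ 2 / ρ ^ 2) *
            fderiv ℝ (QPe G) (E / ρ - m ^ 2 / (2 * ρ ^ 2), 1 / ρ) (1, 0)
        - m / ρ ^ 3 * fderiv ℝ (QPv G) (E / ρ - m ^ 2 / (2 * ρ ^ 2), 1 / ρ) (1, 0) := by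
    have hfun : (fun y => deriv (fun r => q r y E) ρ)
        = fun y => -1 * G (E / ρ - y ^ 2 / (2 * ρ ^ 2)) (1 / ρ) +
          -ρ * ((-(E / ρ ^ 2) + y ^ 2 / ρ ^ 3) * QPe G (E / ρ - y ^ 2 / (2 * ρ ^ 2), 1 / ρ) +
            -(1 / ρ ^ 2) * QPv G (E / ρ - y ^ 2 / (2 * ρ ^ 2), 1 / ρ)) :=
      funext fun y => (hd1r y E ρ hρ0).deriv
    rw [hfun]
    have hg := hasDerivAt_comp2 (F := Function.uncurry G) (hfd _) (hem m E)
      (hasDerivAt_const m (1 / ρ))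
    simp only [Function.uncurry_apply_pair] at hg
    have hA : HasDerivAt (fun y : ℝ => -(E / ρ ^ 2) + y ^ 2 / ρ ^ 3) (2 * m / ρ ^ 3) m := by
      have := ((hasDerivAt_pow 2 m).div_const (ρ ^ 3)).const_add (-(E / ρ ^ 2))
      refine this.congr_deriv ?_
      push_cast
      ring
    have hPc := hasDerivAt_comp2 (F := QPe G) (hPed _) (hem m E) (hasDerivAt_const m (1 / ρ))
    have hVc := hasDerivAt_comp2 (F := QPv G) (hPvd _) (hem m E) (hasDerivAt_const m (1 / ρ))
    have h := (HasDerivAt.const_mul (-1 : ℝ) hg).add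
      (HasDerivAt.const_mul (-ρ) ((hA.mul hPc).add (HasDerivAt.const_mul (-(1 / ρ ^ 2)) hVc)))
    have h' : HasDerivAt (fun y : ℝ => -1 * G (E / ρ - y ^ 2 / (2 * ρ ^ 2)) (1 / ρ) +
          -ρ * ((-(E / ρ ^ 2) + y ^ 2 / ρ ^ 3) * QPe G (E / ρ - y ^ 2 / (2 * ρ ^ 2), 1 / ρ) +
            -(1 / ρ ^ 2) * QPv G (E / ρ - y ^ 2 / (2 * ρ ^ 2), 1 / ρ)))
        (-(m / ρ ^ 2) * QPe G (E / ρ - m ^ 2 / (2 * ρ ^ 2), 1 / ρ)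
          - m / ρ ^ 2 * (E / ρ - m ^ 2 / ρ ^ 2) *
              fderiv ℝ (QPe G) (E / ρ - m ^ 2 / (2 * ρ ^ 2), 1 / ρ) (1, 0)
          - m / ρ ^ 3 * fderiv ℝ (QPv G) (E / ρ - m ^ 2 / (2 * ρ ^ 2), 1 / ρ) (1, 0)) m := by
      refine h.congr_deriv ?_
      simp only [QPe, QPv]
      field_simp
      ring
    exact h'.deriv
  have hqrr : deriv (fun r => deriv (fun r' => q r' m E) r) ρ
      = m ^ 2 / ρ ^ 3 * QPe G (E / ρ - m ^ 2 / (2 * ρ ^ 2), 1 / ρ)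
        - 1 / ρ * (E / ρ - m ^ 2 / ρ ^ 2) ^ 2 *
            fderiv ℝ (QPe G) (E / ρ - m ^ 2 / (2 * ρ ^ 2), 1 / ρ) (1, 0)
        - 1 / ρ ^ 2 * (E / ρ - m ^ 2 / ρ ^ 2) *
            (fderiv ℝ (QPe G) (E / ρ - m ^ 2 / (2 * ρ ^ 2), 1 / ρ) (0, 1)
              + fderiv ℝ (QPv G) (E / ρ - m ^ 2 / (2 * ρ ^ 2), 1 / ρ) (1, 0))
        - 1 / ρ ^ 3 * fderiv ℝ (QPv G) (E / ρ - m ^ 2 / (2 * ρ ^ 2), 1 / ρ) (0, 1) := by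
    have hfun : (fun r => deriv (fun r' => q r' m E) r) =ᶠ[nhds ρ]
        fun r => -1 * G (E / r - m ^ 2 / (2 * r ^ 2)) (1 / r) +
          -r * ((-(E / r ^ 2) + m ^ 2 / r ^ 3) * QPe G (E / r - m ^ 2 / (2 * r ^ 2), 1 / r) +
            -(1 / r ^ 2) * QPv G (E / r - m ^ 2 / (2 * r ^ 2), 1 / r)) := by
      filter_upwards [compl_singleton_mem_nhds hρ0] with r hr
      exact (hd1r m E r hr).deriv
    rw [hfun.deriv_eq]
    have hg := hasDerivAt_comp2 (F := Function.uncurry G) (hfd _) (her m E ρ hρ0) (hvr ρ hρ0)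
    simp only [Function.uncurry_apply_pair] at hg
    have hA : HasDerivAt (fun r : ℝ => -(E / r ^ 2) + m ^ 2 / r ^ 3)
        (2 * E / ρ ^ 3 - 3 * m ^ 2 / ρ ^ 4) ρ := by
      have h1 := HasDerivAt.const_mul (-E) ((hasDerivAt_inv hρ0).fun_pow 2)
      have h2 := HasDerivAt.const_mul (m ^ 2) ((hasDerivAt_inv hρ0).fun_pow 3)
      have h3 := h1.fun_add h2
      have hfun2 : (fun x : ℝ => -E * (x⁻¹) ^ 2 + m ^ 2 * (x⁻¹) ^ 3)
          = fun r : ℝ => -(E / r ^ 2) + m ^ 2 / r ^ 3 := by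
        funext x; ring
      rw [hfun2] at h3
      refine h3.congr_deriv ?_
      norm_num
      field_simp
      ring
    have hB : HasDerivAt (fun r : ℝ => -(1 / r ^ 2)) (2 / ρ ^ 3) ρ := by
      have h1 := ((hasDerivAt_inv hρ0).fun_pow 2).fun_neg
      have hfun2 : (fun x : ℝ => -(x⁻¹) ^ 2) = fun r : ℝ => -(1 / r ^ 2) := by
        funext x; ring
      rw [hfun2] at h1
      refine h1.congr_deriv ?_
      norm_num
      field_simp
    have hPc := hasDerivAt_comp2 (F := QPe G) (hPed _) (her m E ρ hρ0) (hvr ρ hρ0)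
    have hVc := hasDerivAt_comp2 (F := QPv G) (hPvd _) (her m E ρ hρ0) (hvr ρ hρ0)
    have h := (HasDerivAt.const_mul (-1 : ℝ) hg).add
      (HasDerivAt.mul (hasDerivAt_neg' ρ) ((hA.fun_mul hPc).fun_add (hB.fun_mul hVc)))
    have h' : HasDerivAt (fun r : ℝ => -1 * G (E / r - m ^ 2 / (2 * r ^ 2)) (1 / r) +
          -r * ((-(E / r ^ 2) + m ^ 2 / r ^ 3) * QPe G (E / r - m ^ 2 / (2 * r ^ 2), 1 / r) +
            -(1 / r ^ 2) * QPv G (E / r - m ^ 2 / (2 * r ^ 2), 1 / r)))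
        (m ^ 2 / ρ ^ 3 * QPe G (E / ρ - m ^ 2 / (2 * ρ ^ 2), 1 / ρ)
          - 1 / ρ * (E / ρ - m ^ 2 / ρ ^ 2) ^ 2 *
              fderiv ℝ (QPe G) (E / ρ - m ^ 2 / (2 * ρ ^ 2), 1 / ρ) (1, 0)
          - 1 / ρ ^ 2 * (E / ρ - m ^ 2 / ρ ^ 2) *
              (fderiv ℝ (QPe G) (E / ρ - m ^ 2 / (2 * ρ ^ 2), 1 / ρ) (0, 1)
                + fderiv ℝ (QPv G) (E / ρ - m ^ 2 / (2 * ρ ^ 2), 1 / ρ) (1, 0))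
          - 1 / ρ ^ 3 * fderiv ℝ (QPv G) (E / ρ - m ^ 2 / (2 * ρ ^ 2), 1 / ρ) (0, 1)) ρ := by
      refine h.congr_deriv ?_
      simp only [QPe, QPv]
      field_simp
      ring
    exact h'.deriv
  -- identification of the G second partials
  have hGe2 : deriv (fun x => G x (1 / ρ)) (E / ρ - m ^ 2 / (2 * ρ ^ 2))
      = QPe G (E / ρ - m ^ 2 / (2 * ρ ^ 2), 1 / ρ) :=
    (hasDerivAt_slice1 hG _ _).deriv
  have hGee2 : deriv (fun x => deriv (fun y => G y (1 / ρ)) x) (E / ρ - m ^ 2 / (2 * ρ ^ 2))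
      = fderiv ℝ (QPe G) (E / ρ - m ^ 2 / (2 * ρ ^ 2), 1 / ρ) (1, 0) := by
    have hfun : (fun x => deriv (fun y => G y (1 / ρ)) x) = fun x => QPe G (x, 1 / ρ) :=
      funext fun x => (hasDerivAt_slice1 hG x (1 / ρ)).deriv
    rw [hfun]
    have h := hasDerivAt_comp2 (F := QPe G) (hPed _)
      (hasDerivAt_id' (E / ρ - m ^ 2 / (2 * ρ ^ 2))) (hasDerivAt_const _ (1 / ρ))
    have h' : HasDerivAt (fun x : ℝ => QPe G (x, 1 / ρ))
        (fderiv ℝ (QPe G) (E / ρ - m ^ 2 / (2 * ρ ^ 2), 1 / ρ) (1, 0))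
        (E / ρ - m ^ 2 / (2 * ρ ^ 2)) := by
      refine h.congr_deriv ?_
      simp
    exact h'.deriv
  have hGev2 : deriv (fun x => deriv (fun y => G y x) (E / ρ - m ^ 2 / (2 * ρ ^ 2))) (1 / ρ)
      = fderiv ℝ (QPe G) (E / ρ - m ^ 2 / (2 * ρ ^ 2), 1 / ρ) (0, 1) := by
    have hfun : (fun x => deriv (fun y => G y x) (E / ρ - m ^ 2 / (2 * ρ ^ 2)))
        = fun x => QPe G (E / ρ - m ^ 2 / (2 * ρ ^ 2), x) :=
      funext fun x => (hasDerivAt_slice1 hG _ x).deriv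
    rw [hfun]
    have h := hasDerivAt_comp2 (F := QPe G)
      (hPed _) (hasDerivAt_const (1 / ρ) (E / ρ - m ^ 2 / (2 * ρ ^ 2))) (hasDerivAt_id' (1 / ρ))
    have h' : HasDerivAt (fun x : ℝ => QPe G (E / ρ - m ^ 2 / (2 * ρ ^ 2), x))
        (fderiv ℝ (QPe G) (E / ρ - m ^ 2 / (2 * ρ ^ 2), 1 / ρ) (0, 1)) (1 / ρ) := by
      refine h.congr_deriv ?_
      simp
    exact h'.deriv
  have hGvv2 : deriv (fun x => deriv (fun y => G (E / ρ - m ^ 2 / (2 * ρ ^ 2)) y) x) (1 / ρ)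
      = fderiv ℝ (QPv G) (E / ρ - m ^ 2 / (2 * ρ ^ 2), 1 / ρ) (0, 1) := by
    have hfun : (fun x => deriv (fun y => G (E / ρ - m ^ 2 / (2 * ρ ^ 2)) y) x)
        = fun x => QPv G (E / ρ - m ^ 2 / (2 * ρ ^ 2), x) :=
      funext fun x => (hasDerivAt_slice2 hG _ x).deriv
    rw [hfun]
    have h := hasDerivAt_comp2 (F := QPv G)
      (hPvd _) (hasDerivAt_const (1 / ρ) (E / ρ - m ^ 2 / (2 * ρ ^ 2))) (hasDerivAt_id' (1 / ρ))
    have h' : HasDerivAt (fun x : ℝ => QPv G (E / ρ - m ^ 2 / (2 * ρ ^ 2), x))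
        (fderiv ℝ (QPv G) (E / ρ - m ^ 2 / (2 * ρ ^ 2), 1 / ρ) (0, 1)) (1 / ρ) := by
      refine h.congr_deriv ?_
      simp
    exact h'.deriv
  have hsym := QP_symm hG (E / ρ - m ^ 2 / (2 * ρ ^ 2), 1 / ρ)
  -- strict inequalities at our point
  have hP : 0 < QPe G (E / ρ - m ^ 2 / (2 * ρ ^ 2), 1 / ρ) := by
    rw [← hGe2]; exact hGe _ _
  have hb1 : fderiv ℝ (QPe G) (E / ρ - m ^ 2 / (2 * ρ ^ 2), 1 / ρ) (1, 0) < 0 := by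
    rw [← hGee2]; exact hGee _ _
  have hb4 : fderiv ℝ (QPv G) (E / ρ - m ^ 2 / (2 * ρ ^ 2), 1 / ρ) (0, 1) < 0 := by
    rw [← hGvv2]; exact hGvv _ _
  have hcs : (fderiv ℝ (QPe G) (E / ρ - m ^ 2 / (2 * ρ ^ 2), 1 / ρ) (0, 1)) ^ 2 <
      fderiv ℝ (QPe G) (E / ρ - m ^ 2 / (2 * ρ ^ 2), 1 / ρ) (1, 0) *
      fderiv ℝ (QPv G) (E / ρ - m ^ 2 / (2 * ρ ^ 2), 1 / ρ) (0, 1) := by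
    rw [← hGee2, ← hGvv2, ← hGev2]; exact hconc _ _
  -- put everything together
  rw [hqrr, hqrm, hqrE, hqmm, hqmE, hqEE, hGe2, hGee2, hGvv2, hGev2, ← hsym]
  set P := QPe G (E / ρ - m ^ 2 / (2 * ρ ^ 2), 1 / ρ) with hPdef
  set b1 := fderiv ℝ (QPe G) (E / ρ - m ^ 2 / (2 * ρ ^ 2), 1 / ρ) (1, 0) with hb1def
  set b2 := fderiv ℝ (QPe G) (E / ρ - m ^ 2 / (2 * ρ ^ 2), 1 / ρ) (0, 1) with hb2def
  set b4 := fderiv ℝ (QPv G) (E / ρ - m ^ 2 / (2 * ρ ^ 2), 1 / ρ) (0, 1) with hb4def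
  have hdet := q_det_entries ρ m E P b1 b2 b4 hρ0
  have h5 : 0 < (1 / ρ) ^ 5 := pow_pos (one_div_pos.mpr hρ) 5
  have hdiff : 0 < b4 * b1 - b2 ^ 2 := by nlinarith [hcs]
  have hpos : 0 < (1 / ρ) ^ 5 * P * (b4 * b1 - b2 ^ 2) := mul_pos (mul_pos h5 hP) hdiff
  exact ⟨hdet, by rw [hdet]; exact hpos⟩
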